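/- arXiv:2411.18492 — 2 statements merged into one kernel-verified Lean document; each statement's English description precedes it below -/
import Mathlib

section
/- For l ∈ {1,2}: (i) for every positive integer m and every z at which the product-form definition of K_{l,l}(m, z) is defined, K_{l,l}(m, z) equals (m, d_l^∞)^{−z} · χ_{d_l}((m, (D/d_l)^∞)) · χ_{D/d_l}((m, d_l^∞)) · ∏_{p ∤ D, p^a ∥ m} (1 + χ_D(p)/p)^{−1} χ_{d_l}(p^a) (Σ_{j=0}^{a} χ_D(p^j)p^{−jz} − p^{−(z+1)} Σ_{j=0}^{a−2} χ_D(p^j)p^{−jz}); (ii) for every prime p with p ∤ D, K_{l,l}(p, z) = (χ_{d_l}(p) + χ_{D/d_l}(p) p^{−z}) · (1 + χ_D(p)/p)^{−1}; (iii) for every prime p with p | D, every α ≥ 1, and every z with Re z ≥ 0, |K_{l,l}(p^α, z)| ≤ 1. -/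
noncomputable section

open Complex Finset MeasureTheory

namespace EpsteinPaper

/-- `d` is a fundamental discriminant. -/
def IsFundDisc (d : ℤ) : Prop :=
  (d % 4 = 1 ∧ Squarefree d) ∨
  (d % 4 = 0 ∧ Squarefree (d / 4) ∧ (d / 4 % 4 = 2 ∨ d / 4 % 4 = 3))

/-- Generalized binomial coefficient `z choose k`. -/
def gchoose (z : ℂ) (k : ℕ) : ℂ := (∏ i ∈ Finset.range k, (z - (i : ℂ))) / (k.factorial : ℂ)

/-- `τ_k(m)`: the number of ordered `k`-tuples of positive integers with product `m`. -/
def tauk (k m : ℕ) : ℕ := Nat.card {f : Fin k → ℕ // ∏ i, f i = m}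

/-- `τ(m)`: the number of divisors of `m`. -/
def tau (m : ℕ) : ℕ := m.divisors.card

/-- `(m, d^∞)`: the largest divisor of `m` supported on primes dividing `d`. -/
def corad (m d : ℕ) : ℕ :=
  ∏ p ∈ m.primeFactors.filter (fun p => p ∣ d), p ^ (m.factorization p)

/-- `G_N = ∏_{p | N} (1 + p^{-3/4})²`. -/
def GNfac (N : ℕ) : ℝ := ∏ p ∈ N.primeFactors, (1 + (p : ℝ) ^ (-(3 / 4 : ℝ))) ^ 2

/-- The data of the paper: two moduli together with Dirichlet characters on them. -/
structure Ctx where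
  d₁ : ℕ
  d₂ : ℕ
  χ₁ : DirichletCharacter ℂ d₁
  χ₂ : DirichletCharacter ℂ d₂

namespace Ctx

/-- `D = d₁ d₂`. -/
def D (P : Ctx) : ℕ := P.d₁ * P.d₂

/-- Swapping the roles of the two characters. -/
def swap (P : Ctx) : Ctx := ⟨P.d₂, P.d₁, P.χ₂, P.χ₁⟩

/-- The standing hypotheses: `d₁, d₂` are positive and coprime, `-D` is a fundamental
discriminant, and `χ₁, χ₂` are real primitive Dirichlet characters. -/
def Good (P : Ctx) : Prop :=
  0 < P.d₁ ∧ 0 < P.d₂ ∧ Nat.Coprime P.d₁ P.d₂ ∧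
  IsFundDisc (-(P.D : ℤ)) ∧
  P.χ₁.IsPrimitive ∧ P.χ₂.IsPrimitive ∧
  (∀ a : ZMod P.d₁, star (P.χ₁ a) = P.χ₁ a) ∧
  (∀ a : ZMod P.d₂, star (P.χ₂ a) = P.χ₂ a)

/-- `χ_D(n) = χ_{d₁}(n) χ_{d₂}(n)` as a function on `ℕ`. -/
def chiD (P : Ctx) (n : ℕ) : ℂ := P.χ₁ (n : ZMod P.d₁) * P.χ₂ (n : ZMod P.d₂)

/-- `χ_D` as a Dirichlet character modulo `D = d₁ d₂`. -/
def chiDchar (P : Ctx) : DirichletCharacter ℂ (P.d₁ * P.d₂) :=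
  (DirichletCharacter.changeLevel (dvd_mul_right P.d₁ P.d₂) P.χ₁) *
  (DirichletCharacter.changeLevel (dvd_mul_left P.d₂ P.d₁) P.χ₂)

/-- `r(n) = Σ_{ab=n} χ_{d₁}(a) χ_{d₂}(b)`. -/
def r (P : Ctx) (n : ℕ) : ℂ :=
  ∑ p ∈ n.divisorsAntidiagonal, P.χ₁ (p.1 : ZMod P.d₁) * P.χ₂ (p.2 : ZMod P.d₂)

/-- `α` is the multiplicative function whose generating series at each prime `p` is
`((1 - χ_{d₁}(p) x) (1 - χ_{d₂}(p) x))^{1/2}` (principal binomial series); equivalently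
`Σ α(ν) ν^{-s} = (L(s,χ_{d₁}) L(s,χ_{d₂}))^{-1/2}` for `Re s > 1`. -/
def IsAlpha (P : Ctx) (α : ℕ → ℂ) : Prop :=
  α 1 = 1 ∧
  (∀ m n : ℕ, Nat.Coprime m n → α (m * n) = α m * α n) ∧
  (∀ p : ℕ, p.Prime → ∀ k : ℕ, α (p ^ k) =
    ∑ ij ∈ Finset.HasAntidiagonal.antidiagonal k,
      gchoose (1 / 2) ij.1 * (-(P.χ₁ (p : ZMod P.d₁))) ^ ij.1 *
        (gchoose (1 / 2) ij.2 * (-(P.χ₂ (p : ZMod P.d₂))) ^ ij.2))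

end Ctx

/-- The smoothing weight `𝓛(ν)`. -/
def LL (X : ℝ) (ν : ℕ) : ℝ :=
  if (ν : ℝ) < Real.sqrt X then 1
  else if (ν : ℝ) ≤ X then 2 * Real.log (X / (ν : ℝ)) / Real.log X
  else 0

/-- `β(ν) = α(ν) 𝓛(ν)`. -/
def betaf (α : ℕ → ℂ) (X : ℝ) (ν : ℕ) : ℂ := α ν * ((LL X ν : ℝ) : ℂ)

/-- The mollifier `η(s) = Σ_{ν ≤ X} β(ν) ν^{-s}`. -/
def eta (α : ℕ → ℂ) (X : ℝ) (s : ℂ) : ℂ :=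
  ∑ ν ∈ Finset.Icc 1 ⌊X⌋₊, betaf α X ν * (ν : ℂ) ^ (-s)

namespace Ctx

/-- `L(s) = L(s, χ_{d₁}) L(s, χ_{d₂})`. -/
def Lfun (P : Ctx) [NeZero P.d₁] [NeZero P.d₂] (s : ℂ) : ℂ :=
  P.χ₁.LFunction s * P.χ₂.LFunction s

/-- `F(t) = (2π/√D)^{-(1/2+it)} Γ(1/2+it) L(1/2+it) |η(1/2+it)|² e^{(π/2 - 1/T) t}`. -/
def Ffun (P : Ctx) [NeZero P.d₁] [NeZero P.d₂] (α : ℕ → ℂ) (T X : ℝ) (t : ℝ) : ℂ :=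
  (((2 * Real.pi / Real.sqrt (P.D : ℝ) : ℝ)) : ℂ) ^ (-(1 / 2 + Complex.I * (t : ℂ))) *
  Complex.Gamma (1 / 2 + Complex.I * (t : ℂ)) *
  P.Lfun (1 / 2 + Complex.I * (t : ℂ)) *
  ((‖eta α X (1 / 2 + Complex.I * (t : ℂ))‖ ^ 2 : ℝ) : ℂ) *
  ((Real.exp ((Real.pi / 2 - 1 / T) * t) : ℝ) : ℂ)

/-- `I(t, H) = ∫_t^{t+H} F(u) du`. -/
def Ifun (P : Ctx) [NeZero P.d₁] [NeZero P.d₂] (α : ℕ → ℂ) (T X t H : ℝ) : ℂ :=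
  ∫ u in t..(t + H), P.Ffun α T X u

/-- The function `G(y)` (with `δ = 1/T`). -/
def Gfun (P : Ctx) (α : ℕ → ℂ) (T X : ℝ) (y : ℝ) : ℝ :=
  (‖∑ ν₁ ∈ Finset.Icc 1 ⌊X⌋₊, ∑ ν₂ ∈ Finset.Icc 1 ⌊X⌋₊,
    betaf α X ν₁ * betaf α X ν₂ / (ν₂ : ℂ) *
    ∑' n : ℕ, P.r n *
      Complex.exp (-(((2 * Real.pi * (n : ℝ) * (ν₁ : ℝ) /
          (Real.sqrt (P.D : ℝ) * (ν₂ : ℝ)) * y : ℝ)) : ℂ) *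
        (((Real.sin (1 / T) : ℝ) : ℂ) + Complex.I * ((Real.cos (1 / T) : ℝ) : ℂ)))‖) ^ 2

/-- `J(x, θ) = ∫_x^∞ G(u) u^{-θ} du`. -/
def Jfun (P : Ctx) (α : ℕ → ℂ) (T X θ x : ℝ) : ℝ :=
  ∫ u in Set.Ioi x, P.Gfun α T X u * u ^ (-θ)

/-- The Euler-factor function `K(m, s)`. -/
def Kf (P : Ctx) (m : ℕ) (s : ℂ) : ℂ :=
  ∏ p ∈ m.primeFactors,
    ((∑' k : ℕ, (P.r (p ^ k)) ^ 2 * (p : ℂ) ^ (-(k : ℂ) * s))⁻¹ *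
     (∑' k : ℕ, P.r (p ^ (m.factorization p + k)) * P.r (p ^ k) * (p : ℂ) ^ (-(k : ℂ) * s)))

/-- `K_{l,l}(m, z)` in its "sum" form (an entire function of `z`); the case `l = 1`.  The case
`l = 2` is obtained by applying this to `P.swap`. -/
def KllS (P : Ctx) (m : ℕ) (z : ℂ) : ℂ :=
  ((corad m P.d₁ : ℕ) : ℂ) ^ (-z) *
  P.χ₁ ((corad m P.d₂ : ℕ) : ZMod P.d₁) * P.χ₂ ((corad m P.d₁ : ℕ) : ZMod P.d₂) *
  ∏ p ∈ m.primeFactors.filter (fun p => ¬ p ∣ P.D),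
    (1 + P.chiD p / (p : ℂ))⁻¹ * (P.χ₁ (p : ZMod P.d₁)) ^ (m.factorization p) *
    ((∑ j ∈ Finset.range (m.factorization p + 1), P.chiD (p ^ j) * (p : ℂ) ^ (-(j : ℂ) * z)) -
      (p : ℂ) ^ (-(z + 1)) *
        ∑ j ∈ Finset.range (m.factorization p - 1), P.chiD (p ^ j) * (p : ℂ) ^ (-(j : ℂ) * z))

/-- `K_{l,l}(m, z)` in its original "product" form; the case `l = 1`. -/
def KllP (P : Ctx) (m : ℕ) (z : ℂ) : ℂ :=
  ((corad m P.d₁ : ℕ) : ℂ) ^ (-z) *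
  P.χ₁ ((corad m P.d₂ : ℕ) : ZMod P.d₁) * P.χ₂ ((corad m P.d₁ : ℕ) : ZMod P.d₂) *
  ∏ p ∈ m.primeFactors.filter (fun p => ¬ p ∣ P.D),
    (1 - (p : ℂ) ^ (-(2 : ℂ)))⁻¹ * (1 - P.chiD p * (p : ℂ) ^ (-z))⁻¹ * (1 - P.chiD p / (p : ℂ)) *
    (P.χ₁ (p : ZMod P.d₁)) ^ (m.factorization p) *
    (1 - (p : ℂ) ^ (-(z + 1)) +
      P.chiD (p ^ (m.factorization p + 1)) *
        (p : ℂ) ^ (-((m.factorization p : ℂ) * z + 1)) * (1 - (p : ℂ) ^ (-(z - 1))))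

/-- `K_{l,l}` for `l ∈ {1, 2}` (sum form). -/
def Kl (P : Ctx) (l : Fin 2) : ℕ → ℂ → ℂ :=
  if l = 0 then P.KllS else P.swap.KllS

/-- `K_{1,2}(m₁, m₂, z)`. -/
def K12 (P : Ctx) (m₁ m₂ : ℕ) (z : ℂ) : ℂ :=
  P.χ₁ (m₁ : ZMod P.d₁) * P.χ₂ (m₂ : ZMod P.d₂) *
  (∑ q ∈ (corad (m₁ * m₂ / P.D) P.D).divisors, (q : ℂ) ^ (-z)) *
  ∏ p ∈ (m₁ * m₂).primeFactors.filter (fun p => ¬ p ∣ P.D),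
    (1 + P.chiD p / (p : ℂ))⁻¹ *
    ((∑ j ∈ Finset.range ((m₁ * m₂).factorization p + 1), (p : ℂ) ^ (-(j : ℂ) * z)) -
      P.chiD p * (p : ℂ) ^ (-(z + 1)) *
        ∑ j ∈ Finset.range ((m₁ * m₂).factorization p - 1), (p : ℂ) ^ (-(j : ℂ) * z))

end Ctx

/-- The Gauss sum `G(χ) = Σ_{x mod d} χ(x) e^{2πi x/d}`. -/
def gaussS (d : ℕ) (χ : DirichletCharacter ℂ d) : ℂ :=
  ∑ x ∈ Finset.range d, χ (x : ZMod d) * Complex.exp (2 * (Real.pi : ℂ) * Complex.I * (x : ℂ) / (d : ℂ))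

/-- `χ(x / y)`, with the convention that this is `0` when `y ∤ x`. -/
def chiAt (d : ℕ) (χ : DirichletCharacter ℂ d) (x y : ℕ) : ℂ :=
  if y ∣ x then χ ((x / y : ℕ) : ZMod d) else 0

namespace Ctx

/-- The exponential sum `ε_q(l)`. -/
def epsq (P : Ctx) (m₁ m₂ l q : ℕ) : ℂ :=
  ∑ a ∈ (Finset.range q).filter (fun a => Nat.Coprime a q),
    Complex.exp (-(2 * (Real.pi : ℂ) * Complex.I * (a : ℂ) * (l : ℂ)) / (q : ℂ)) *
    (gaussS P.d₁ P.χ₁ / ((Real.sqrt (P.d₁ : ℝ) : ℝ) : ℂ) *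
        P.χ₁ ((a * (m₁ / Nat.gcd m₁ q) : ℕ) : ZMod P.d₁) *
        chiAt P.d₂ P.χ₂ (q / Nat.gcd q m₁) P.d₁ +
      gaussS P.d₂ P.χ₂ / ((Real.sqrt (P.d₂ : ℝ) : ℝ) : ℂ) *
        P.χ₂ ((a * (m₁ / Nat.gcd m₁ q) : ℕ) : ZMod P.d₂) *
        chiAt P.d₁ P.χ₁ (q / Nat.gcd q m₁) P.d₂) *
    ((starRingEnd ℂ) (gaussS P.d₁ P.χ₁) / ((Real.sqrt (P.d₁ : ℝ) : ℝ) : ℂ) *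
        P.χ₁ ((a * (m₂ / Nat.gcd m₂ q) : ℕ) : ZMod P.d₁) *
        chiAt P.d₂ P.χ₂ (q / Nat.gcd q m₂) P.d₁ +
      (starRingEnd ℂ) (gaussS P.d₂ P.χ₂) / ((Real.sqrt (P.d₂ : ℝ) : ℝ) : ℂ) *
        P.χ₂ ((a * (m₂ / Nat.gcd m₂ q) : ℕ) : ZMod P.d₂) *
        chiAt P.d₁ P.χ₁ (q / Nat.gcd q m₂) P.d₂)

/-- The `q`-th term of the singular series `σ(l, m₁, m₂)`. -/
def sigTerm (P : Ctx) (m₁ m₂ l q : ℕ) : ℂ :=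
  P.epsq m₁ m₂ l q * ((Nat.gcd q (m₁ * m₂) : ℕ) : ℂ) /
    ((q : ℂ) ^ 2 *
      ((Real.sqrt (((P.D / Nat.gcd (q / Nat.gcd q m₁) P.D) *
          (P.D / Nat.gcd (q / Nat.gcd q m₂) P.D) : ℕ) : ℝ) : ℝ) : ℂ))

/-- The singular series `σ(l, m₁, m₂) = Σ_{q ≥ 1} ε_q(l) (q, m₁m₂) / (q² √(r₁ r₂))`. -/
def sigmaS (P : Ctx) (m₁ m₂ l : ℕ) : ℂ :=
  ∑' q : ℕ, if q = 0 then 0 else P.sigTerm m₁ m₂ l q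

/-- The shifted-convolution Dirichlet series `D_{m₁,m₂}(s, l)`. -/
def Dser (P : Ctx) (m₁ m₂ l : ℕ) (s : ℂ) : ℂ :=
  ∑' n : ℕ, (if m₂ ∣ (m₁ * n + l) then P.r ((m₁ * n + l) / m₂) else 0) * P.r n *
    ((m₁ : ℂ) * (n : ℂ) + (l : ℂ) / 2) ^ (-s)

/-- The fourfold Selberg sum `S(z)` built from `K`. -/
def Ssum (P : Ctx) (α : ℕ → ℂ) (X : ℝ) (z : ℂ) : ℂ :=
  ∑ ν₁ ∈ Finset.Icc 1 ⌊X⌋₊, ∑ ν₂ ∈ Finset.Icc 1 ⌊X⌋₊,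
    ∑ ν₃ ∈ Finset.Icc 1 ⌊X⌋₊, ∑ ν₄ ∈ Finset.Icc 1 ⌊X⌋₊,
      betaf α X ν₁ * betaf α X ν₂ * betaf α X ν₃ * betaf α X ν₄ / ((ν₂ : ℂ) * (ν₄ : ℂ)) *
      (((Nat.gcd (ν₁ * ν₄) (ν₂ * ν₃) : ℕ) : ℂ) / ((ν₁ : ℂ) * (ν₃ : ℂ))) ^ ((1 : ℂ) - z) *
      P.Kf ((ν₁ * ν₄) / Nat.gcd (ν₁ * ν₄) (ν₂ * ν₃)) (1 - z) *
      P.Kf ((ν₂ * ν₃) / Nat.gcd (ν₁ * ν₄) (ν₂ * ν₃)) (1 - z)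

/-- The fourfold Selberg sum `S_{l,l}(z)` built from `K_{l,l}`. -/
def Sll (P : Ctx) (α : ℕ → ℂ) (l : Fin 2) (X : ℝ) (z : ℂ) : ℂ :=
  ∑ ν₁ ∈ Finset.Icc 1 ⌊X⌋₊, ∑ ν₂ ∈ Finset.Icc 1 ⌊X⌋₊,
    ∑ ν₃ ∈ Finset.Icc 1 ⌊X⌋₊, ∑ ν₄ ∈ Finset.Icc 1 ⌊X⌋₊,
      betaf α X ν₁ * betaf α X ν₂ * betaf α X ν₃ * betaf α X ν₄ / ((ν₂ : ℂ) * (ν₄ : ℂ)) *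
      (((Nat.gcd (ν₁ * ν₄) (ν₂ * ν₃) : ℕ) : ℂ) / ((ν₁ : ℂ) * (ν₃ : ℂ))) ^ ((1 : ℂ) - z) *
      P.Kl l ((ν₁ * ν₄) / Nat.gcd (ν₁ * ν₄) (ν₂ * ν₃)) z *
      P.Kl l ((ν₂ * ν₃) / Nat.gcd (ν₁ * ν₄) (ν₂ * ν₃)) z

/-- The sum `S_z(X₁, γ, N)` built from `K`. -/
def SzK (P : Ctx) (α : ℕ → ℂ) (X₁ : ℝ) (γ z : ℂ) (N : ℕ) : ℂ :=
  ∑ ν ∈ (Finset.Icc 1 ⌊X₁⌋₊).filter (fun ν => Nat.Coprime ν N),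
    α ν * P.Kf ν (1 - z) * (ν : ℂ) ^ (γ - 1) * ((Real.log (X₁ / (ν : ℝ)) : ℝ) : ℂ)

/-- The sum `S_z^{(l,l)}(X₁, γ, N)` built from `K_{l,l}`. -/
def SzKll (P : Ctx) (α : ℕ → ℂ) (l : Fin 2) (X₁ : ℝ) (γ z : ℂ) (N : ℕ) : ℂ :=
  ∑ ν ∈ (Finset.Icc 1 ⌊X₁⌋₊).filter (fun ν => Nat.Coprime ν N),
    α ν * P.Kl l ν z * (ν : ℂ) ^ (γ - 1) * ((Real.log (X₁ / (ν : ℝ)) : ℝ) : ℂ)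

/-- The number of units in the ring of integers of `ℚ(√-D)`. -/
def unitsD (P : Ctx) : ℝ := if P.D = 3 then 6 else if P.D = 4 then 4 else 2

/-- `h` is the class number of `ℚ(√-D)`, characterized by Dirichlet's class number formula
`L(1, χ_D) = 2 π h / (w √D)`. -/
def IsClassNumber (P : Ctx) [NeZero (P.d₁ * P.d₂)] (h : ℕ) : Prop :=
  DirichletCharacter.LFunction P.chiDchar 1 =
    (((2 * Real.pi * (h : ℝ) / (P.unitsD * Real.sqrt (P.D : ℝ)) : ℝ)) : ℂ)

end Ctx

-- AUX START
private lemma key_alg (q c x : ℂ) (hq : q ≠ 0) (hq2 : (q : ℂ) ^ 2 ≠ 1) (hsq : c ^ 2 = 1)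
    (hx : 1 - c * x ≠ 0) (hqc : q + c ≠ 0) (b : ℕ) :
    (1 - (q ^ 2)⁻¹)⁻¹ * (1 - c * x)⁻¹ * (1 - c / q) *
      (1 - x * q⁻¹ + c ^ (b + 1 + 1) * (x ^ (b + 1) * q⁻¹) * (1 - x * q)) =
    (1 + c / q)⁻¹ *
      ((∑ j ∈ Finset.range (b + 1 + 1), (c * x) ^ j) -
        (x * q⁻¹) * ∑ j ∈ Finset.range b, (c * x) ^ j) := by
  have hcx1 : c * x ≠ 1 := fun h => hx (by rw [h]; ring)
  have hcx : c * x - 1 ≠ 0 := sub_ne_zero.mpr hcx1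
  rw [geom_sum_eq hcx1, geom_sum_eq hcx1]
  have h1 : (q : ℂ) ^ 2 - 1 ≠ 0 := sub_ne_zero.mpr hq2
  have hqc' : q - c ≠ 0 := fun h => hq2 (by rw [sub_eq_zero] at h; rw [h, hsq])
  have e1 : (1 - (q ^ 2)⁻¹)⁻¹ = q ^ 2 * (q ^ 2 - 1)⁻¹ := by
    rw [show (1 : ℂ) - (q ^ 2)⁻¹ = (q ^ 2 - 1) * (q ^ 2)⁻¹ by field_simp, mul_inv, inv_inv,
      mul_comm]
  have e2 : (1 + c / q)⁻¹ = q * (q + c)⁻¹ := by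
    rw [show (1 : ℂ) + c / q = (q + c) * q⁻¹ by field_simp, mul_inv, inv_inv, mul_comm]
  have e3 : (1 - c * x)⁻¹ = -(c * x - 1)⁻¹ := by
    rw [show (1 : ℂ) - c * x = -(c * x - 1) by ring, inv_neg]
  have hkey : c ^ (b + 1 + 1) = c ^ b := by
    rw [pow_succ, pow_succ, mul_assoc, ← sq, hsq, mul_one]
  have step1 : q ^ 2 * (q ^ 2 - 1)⁻¹ * (1 - c / q) = q * (q + c)⁻¹ := by
    rw [show q ^ 2 - 1 = (q - c) * (q + c) by linear_combination hsq]
    field_simp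
  have step2 : -(1 - x * q⁻¹ + c ^ (b + 1 + 1) * (x ^ (b + 1) * q⁻¹) * (1 - x * q)) =
      ((c * x) ^ (b + 1 + 1) - 1) - x * q⁻¹ * ((c * x) ^ b - 1) := by
    rw [hkey, mul_pow, mul_pow, hkey]
    field_simp
    ring
  rw [e1, e2, e3]
  calc q ^ 2 * (q ^ 2 - 1)⁻¹ * -(c * x - 1)⁻¹ * (1 - c / q) *
        (1 - x * q⁻¹ + c ^ (b + 1 + 1) * (x ^ (b + 1) * q⁻¹) * (1 - x * q))
      = (q ^ 2 * (q ^ 2 - 1)⁻¹ * (1 - c / q)) * ((c * x - 1)⁻¹ *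
          -(1 - x * q⁻¹ + c ^ (b + 1 + 1) * (x ^ (b + 1) * q⁻¹) * (1 - x * q))) := by ring
    _ = (q * (q + c)⁻¹) * ((c * x - 1)⁻¹ *
          (((c * x) ^ (b + 1 + 1) - 1) - x * q⁻¹ * ((c * x) ^ b - 1))) := by rw [step1, step2]
    _ = q * (q + c)⁻¹ * (((c * x) ^ (b + 1 + 1) - 1) / (c * x - 1) -
          x * q⁻¹ * (((c * x) ^ b - 1) / (c * x - 1))) := by
        rw [div_eq_mul_inv, div_eq_mul_inv]; ring

private lemma real_char_sq {d : ℕ} (χ : DirichletCharacter ℂ d)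
    (hr : ∀ a : ZMod d, star (χ a) = χ a) {a : ZMod d} (ha : IsUnit a) : χ a ^ 2 = 1 := by
  have h1 : ‖χ a‖ = 1 := by
    have := χ.unit_norm_eq_one ha.unit
    rwa [ha.unit_spec] at this
  have h2 : χ a * χ a = 1 := by
    nth_rewrite 2 [← hr a]
    rw [show star (χ a) = (starRingEnd ℂ) (χ a) from rfl, Complex.mul_conj,
      Complex.normSq_eq_norm_sq, h1]
    norm_num
  rw [sq]; exact h2

private lemma chiD_pow (P : Ctx) (p j : ℕ) : P.chiD (p ^ j) = P.chiD p ^ j := by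
  simp [Ctx.chiD, Nat.cast_pow, map_pow, mul_pow]

private lemma swap_chiD (P : Ctx) (n : ℕ) : P.swap.chiD n = P.chiD n := mul_comm _ _

private lemma swap_D (P : Ctx) : P.swap.D = P.D := Nat.mul_comm _ _

private lemma good_swap {P : Ctx} (hP : P.Good) : P.swap.Good := by
  obtain ⟨h1, h2, h3, h4, h5, h6, h7, h8⟩ := hP
  refine ⟨h2, h1, h3.symm, ?_, h6, h5, h8, h7⟩
  rw [swap_D P]
  exact h4

private lemma chiD_sq (P : Ctx) (hP : P.Good) {p : ℕ} (hp : p.Prime) (hpD : ¬ p ∣ P.D) :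
    P.chiD p ^ 2 = 1 := by
  have h1 : ¬ p ∣ P.d₁ := fun h => hpD (dvd_mul_of_dvd_left h P.d₂)
  have h2 : ¬ p ∣ P.d₂ := fun h => hpD (dvd_mul_of_dvd_right h P.d₁)
  have u1 : IsUnit ((p : ℕ) : ZMod P.d₁) := (ZMod.isUnit_prime_iff_not_dvd hp).mpr h1
  have u2 : IsUnit ((p : ℕ) : ZMod P.d₂) := (ZMod.isUnit_prime_iff_not_dvd hp).mpr h2
  rw [Ctx.chiD, mul_pow, real_char_sq P.χ₁ hP.2.2.2.2.2.2.1 u1,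
    real_char_sq P.χ₂ hP.2.2.2.2.2.2.2 u2, one_mul]

private lemma chi1_sq (P : Ctx) (hP : P.Good) {p : ℕ} (hp : p.Prime) (hpd : ¬ p ∣ P.d₁) :
    P.χ₁ ((p : ℕ) : ZMod P.d₁) ^ 2 = 1 :=
  real_char_sq P.χ₁ hP.2.2.2.2.2.2.1 ((ZMod.isUnit_prime_iff_not_dvd hp).mpr hpd)

private lemma euler_factor_eq (P : Ctx) (hP : P.Good) {p : ℕ} (hp : p.Prime) (hpD : ¬ p ∣ P.D)
    {a : ℕ} (ha : 1 ≤ a) {z : ℂ} (hz : (1 : ℂ) - P.chiD p * (p : ℂ) ^ (-z) ≠ 0) :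
    (1 - (p : ℂ) ^ (-(2 : ℂ)))⁻¹ * (1 - P.chiD p * (p : ℂ) ^ (-z))⁻¹ *
    (1 - P.chiD p / (p : ℂ)) * (P.χ₁ (p : ZMod P.d₁)) ^ a *
    (1 - (p : ℂ) ^ (-(z + 1)) +
      P.chiD (p ^ (a + 1)) * (p : ℂ) ^ (-((a : ℂ) * z + 1)) * (1 - (p : ℂ) ^ (-(z - 1)))) =
    (1 + P.chiD p / (p : ℂ))⁻¹ * (P.χ₁ (p : ZMod P.d₁)) ^ a *
    ((∑ j ∈ Finset.range (a + 1), P.chiD (p ^ j) * (p : ℂ) ^ (-(j : ℂ) * z)) -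
      (p : ℂ) ^ (-(z + 1)) *
        ∑ j ∈ Finset.range (a - 1), P.chiD (p ^ j) * (p : ℂ) ^ (-(j : ℂ) * z)) := by
  obtain ⟨b, rfl⟩ : ∃ b, a = b + 1 := ⟨a - 1, by omega⟩
  have hq0 : (p : ℂ) ≠ 0 := Nat.cast_ne_zero.mpr hp.pos.ne'
  have hq2 : (p : ℂ) ^ 2 ≠ 1 := by
    intro h
    have h2 : ((p ^ 2 : ℕ) : ℂ) = ((1 : ℕ) : ℂ) := by push_cast; rw [h]
    have := Nat.cast_inj (R := ℂ) |>.mp h2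
    have := hp.one_lt
    nlinarith
  have hsq : P.chiD p ^ 2 = 1 := chiD_sq P hP hp hpD
  have hc : P.chiD p = 1 ∨ P.chiD p = -1 := by
    rw [sq] at hsq; exact mul_self_eq_one_iff.mp hsq
  have hqc : (p : ℂ) + P.chiD p ≠ 0 := by
    rcases hc with h | h
    · rw [h]
      intro hcon
      have h2 : ((p + 1 : ℕ) : ℂ) = 0 := by push_cast; linear_combination hcon
      have := Nat.cast_eq_zero.mp h2
      omega
    · rw [h]
      intro hcon
      have h2 : ((p : ℕ) : ℂ) = ((1 : ℕ) : ℂ) := by push_cast; linear_combination hcon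
      have := Nat.cast_inj (R := ℂ) |>.mp h2
      exact hp.ne_one this
  have hsum : ∀ j : ℕ, P.chiD (p ^ j) * (p : ℂ) ^ (-(j : ℂ) * z) =
      (P.chiD p * (p : ℂ) ^ (-z)) ^ j := fun j => by
    rw [chiD_pow, show -(j : ℂ) * z = (j : ℂ) * (-z) by ring, Complex.cpow_nat_mul, mul_pow]
  have r1 : (p : ℂ) ^ (-(2 : ℂ)) = (((p : ℂ)) ^ 2)⁻¹ := by
    rw [show (-(2 : ℂ)) = -((2 : ℕ) : ℂ) by norm_num, Complex.cpow_neg, Complex.cpow_natCast]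
  have r2 : (p : ℂ) ^ (-(z + 1)) = (p : ℂ) ^ (-z) * ((p : ℂ))⁻¹ := by
    rw [show -(z + 1) = -z + (-1) by ring, Complex.cpow_add _ _ hq0, Complex.cpow_neg_one]
  have r3 : (p : ℂ) ^ (-(z - 1)) = (p : ℂ) ^ (-z) * (p : ℂ) := by
    rw [show -(z - 1) = -z + 1 by ring, Complex.cpow_add _ _ hq0, Complex.cpow_one]
  have r4 : (p : ℂ) ^ (-(((b + 1 : ℕ) : ℂ) * z + 1)) =
      ((p : ℂ) ^ (-z)) ^ (b + 1) * ((p : ℂ))⁻¹ := by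
    rw [show -(((b + 1 : ℕ) : ℂ) * z + 1) = ((b + 1 : ℕ) : ℂ) * (-z) + (-1) by ring,
      Complex.cpow_add _ _ hq0, Complex.cpow_nat_mul, Complex.cpow_neg_one]
  rw [r1, r2, r3, r4, chiD_pow]
  simp only [hsum, Nat.add_sub_cancel]
  linear_combination (P.χ₁ ((p : ℕ) : ZMod P.d₁) ^ (b + 1)) *
    key_alg (p : ℂ) (P.chiD p) ((p : ℂ) ^ (-z)) hq0 hq2 hsq hz hqc b

private lemma KllP_eq_KllS (P : Ctx) (hP : P.Good) (m : ℕ) (hm : 0 < m) (z : ℂ)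
    (hz : ∀ p ∈ m.primeFactors.filter (fun p => ¬ p ∣ P.D),
      (1 : ℂ) - P.chiD p * (p : ℂ) ^ (-z) ≠ 0) : P.KllP m z = P.KllS m z := by
  unfold Ctx.KllP Ctx.KllS
  congr 1
  refine Finset.prod_congr rfl fun p hp => ?_
  have hmem := Finset.mem_filter.mp hp
  have hprime : p.Prime := Nat.prime_of_mem_primeFactors hmem.1
  have ha : 1 ≤ m.factorization p :=
    hprime.factorization_pos_of_dvd hm.ne' (Nat.dvd_of_mem_primeFactors hmem.1)
  exact euler_factor_eq P hP hprime hmem.2 ha (hz p hp)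

private lemma corad_prime_pow {p : ℕ} (hp : p.Prime) {a : ℕ} (ha : a ≠ 0) (d : ℕ) :
    corad (p ^ a) d = if p ∣ d then p ^ a else 1 := by
  unfold corad
  rw [Nat.primeFactors_prime_pow ha hp, Finset.filter_singleton]
  split
  · rw [Finset.prod_singleton, hp.factorization_pow, Finsupp.single_eq_same]
  · rw [Finset.prod_empty]
-- AUX END

private lemma KllP_prime (P : Ctx) (hP : P.Good) {p : ℕ} (hp : p.Prime) (hpD : ¬ p ∣ P.D)
    {z : ℂ} (hz : (1 : ℂ) - P.chiD p * (p : ℂ) ^ (-z) ≠ 0) :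
    P.KllP p z = (P.χ₁ (p : ZMod P.d₁) + P.χ₂ (p : ZMod P.d₂) * (p : ℂ) ^ (-z)) *
      (1 + P.chiD p / (p : ℂ))⁻¹ := by
  have h1 : ¬ p ∣ P.d₁ := fun h => hpD (dvd_mul_of_dvd_left h P.d₂)
  have h2 : ¬ p ∣ P.d₂ := fun h => hpD (dvd_mul_of_dvd_right h P.d₁)
  rw [KllP_eq_KllS P hP p hp.pos z (by
    intro q hq
    have hmem := Finset.mem_filter.mp hq
    have : q = p := by
      have := hmem.1
      rw [hp.primeFactors, Finset.mem_singleton] at this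
      exact this
    rw [this]
    exact hz)]
  unfold Ctx.KllS
  have hc1 : corad p P.d₁ = 1 := by
    have := corad_prime_pow hp one_ne_zero P.d₁
    rw [pow_one] at this
    rw [this, if_neg h1]
  have hc2 : corad p P.d₂ = 1 := by
    have := corad_prime_pow hp one_ne_zero P.d₂
    rw [pow_one] at this
    rw [this, if_neg h2]
  rw [hc1, hc2, hp.primeFactors, Finset.filter_singleton, if_pos hpD, Finset.prod_singleton,
    hp.factorization, Finsupp.single_eq_same]
  simp only [Nat.cast_one, map_one, Complex.one_cpow, one_mul, mul_one]
  rw [Finset.sum_range_succ, Finset.sum_range_one, Nat.sub_self, Finset.range_zero,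
    Finset.sum_empty, mul_zero, sub_zero]
  simp only [pow_zero, pow_one, Nat.cast_zero, Nat.cast_one, zero_mul, neg_zero,
    Complex.cpow_zero, mul_one, one_mul, neg_mul]
  have hsq1 : P.χ₁ ((p : ℕ) : ZMod P.d₁) ^ 2 = 1 := chi1_sq P hP hp h1
  have hD : P.chiD 1 = 1 := by rw [Ctx.chiD]; simp
  rw [hD]
  simp only [Ctx.chiD]
  linear_combination ((1 + P.χ₁ ((p : ℕ) : ZMod P.d₁) * P.χ₂ ((p : ℕ) : ZMod P.d₂) /
    (p : ℂ))⁻¹ * P.χ₂ ((p : ℕ) : ZMod P.d₂) * (p : ℂ) ^ (-z)) * hsq1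

private lemma abs_natpow_cpow_le_one {p a : ℕ} (hp : 0 < p) {z : ℂ} (hz : 0 ≤ z.re) :
    ‖((p ^ a : ℕ) : ℂ) ^ (-z)‖ ≤ 1 := by
  have hpos : (0 : ℝ) < ((p ^ a : ℕ) : ℝ) := by
    have : 0 < p ^ a := pow_pos hp a
    exact_mod_cast this
  rw [show ((p ^ a : ℕ) : ℂ) = ((((p ^ a : ℕ) : ℝ)) : ℂ) by push_cast; norm_num,
    Complex.norm_cpow_eq_rpow_re_of_pos hpos]
  refine Real.rpow_le_one_of_one_le_of_nonpos ?_ ?_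
  · have : 1 ≤ p ^ a := Nat.one_le_pow _ _ hp
    exact_mod_cast this
  · simpa using neg_nonpos.mpr hz

private lemma abs_char_le_one {d : ℕ} (χ : DirichletCharacter ℂ d) (x : ZMod d) :
    ‖χ x‖ ≤ 1 := by
  have := DirichletCharacter.norm_le_one χ x
  exact this


private lemma KllP_bound (P : Ctx) (hP : P.Good) {p : ℕ} (hp : p.Prime) (hpD : p ∣ P.D)
    {a : ℕ} (ha : 1 ≤ a) {z : ℂ} (hz : 0 ≤ z.re) : ‖P.KllP (p ^ a) z‖ ≤ 1 := by
  unfold Ctx.KllP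
  rw [Nat.primeFactors_prime_pow (by omega : a ≠ 0) hp, Finset.filter_singleton,
    if_neg (not_not_intro hpD), Finset.prod_empty, mul_one,
    corad_prime_pow hp (by omega) P.d₁, corad_prime_pow hp (by omega) P.d₂]
  have hcop : Nat.gcd P.d₁ P.d₂ = 1 := hP.2.2.1
  have hnd : ¬ (p ∣ P.d₁ ∧ p ∣ P.d₂) := fun h =>
    hp.ne_one (Nat.dvd_one.mp (hcop ▸ Nat.dvd_gcd h.1 h.2))
  have hpD' : p ∣ P.d₁ * P.d₂ := hpD
  rcases hp.dvd_mul.mp hpD' with h1 | h2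
  · rw [if_pos h1, if_neg (fun h => hnd ⟨h1, h⟩)]
    simp only [Nat.cast_one, map_one, mul_one]
    rw [norm_mul]
    exact mul_le_one₀ (abs_natpow_cpow_le_one hp.pos hz) (norm_nonneg _)
      (abs_char_le_one P.χ₂ _)
  · rw [if_neg (fun h => hnd ⟨h, h2⟩), if_pos h2]
    simp only [Nat.cast_one, Complex.one_cpow, one_mul, map_one, mul_one]
    exact abs_char_le_one P.χ₁ _

theorem statement_6 (P : Ctx) (hP : P.Good) :
    (∀ m : ℕ, 0 < m → ∀ z : ℂ,
      (∀ p ∈ m.primeFactors.filter (fun p => ¬ p ∣ P.D),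
          (1 : ℂ) - P.chiD p * (p : ℂ) ^ (-z) ≠ 0) →
      P.KllP m z = P.KllS m z ∧ P.swap.KllP m z = P.swap.KllS m z) ∧
    (∀ p : ℕ, p.Prime → ¬ p ∣ P.D → ∀ z : ℂ,
      (1 : ℂ) - P.chiD p * (p : ℂ) ^ (-z) ≠ 0 →
      P.KllP p z =
        (P.χ₁ (p : ZMod P.d₁) + P.χ₂ (p : ZMod P.d₂) * (p : ℂ) ^ (-z)) *
          (1 + P.chiD p / (p : ℂ))⁻¹ ∧
      P.swap.KllP p z =
        (P.χ₂ (p : ZMod P.d₂) + P.χ₁ (p : ZMod P.d₁) * (p : ℂ) ^ (-z)) *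
          (1 + P.chiD p / (p : ℂ))⁻¹) ∧
    (∀ p : ℕ, p.Prime → p ∣ P.D → ∀ a : ℕ, 1 ≤ a → ∀ z : ℂ, 0 ≤ z.re →
      ‖P.KllP (p ^ a) z‖ ≤ 1 ∧ ‖P.swap.KllP (p ^ a) z‖ ≤ 1) := by
  have hswap : P.swap.Good := good_swap hP
  refine ⟨?_, ?_, ?_⟩
  · intro m hm z hz
    refine ⟨KllP_eq_KllS P hP m hm z hz, KllP_eq_KllS P.swap hswap m hm z ?_⟩
    intro p hp
    rw [swap_chiD]
    have hset : m.primeFactors.filter (fun p => ¬ p ∣ P.swap.D) =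
        m.primeFactors.filter (fun p => ¬ p ∣ P.D) := by rw [swap_D]
    exact hz p (hset ▸ hp)
  · intro p hp hpD z hz
    refine ⟨KllP_prime P hP hp hpD hz, ?_⟩
    have h := KllP_prime P.swap hswap hp (by rwa [swap_D]) (by rwa [swap_chiD])
    rwa [swap_chiD] at h
  · intro p hp hpD a ha z hz
    exact ⟨KllP_bound P hP hp hpD ha hz, KllP_bound P.swap hswap hp (by rwa [swap_D]) ha hz⟩

end EpsteinPaper
end
end

section
/- Let p be a prime with p ∤ d₁d₂. Then: α(p) = −(χ_{d₁}(p) + χ_{d₂}(p))/2; α(p²) = −(χ_{d₁}(p)² + χ_{d₂}(p)²)/8 + χ_D(p)/4; α(p^k) = 0 for every odd k ≥ 3; and |α(p^k)| ≤ 1/(2k) for every even k ≥ 4. -/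
noncomputable section

open Complex Finset MeasureTheory

namespace EpsteinPaper

section Aux

open PowerSeries

private lemma gchoose_eq_ringChoose (z : ℂ) (k : ℕ) : gchoose z k = Ring.choose z k := by
  have h1 : (Polynomial.smeval (descPochhammer ℤ k) z) = ∏ i ∈ Finset.range k, (z - i) := by
    induction k with
    | zero => simp [descPochhammer_zero]
    | succ n ih =>
      rw [descPochhammer_succ_right, Polynomial.smeval_mul, ih, Finset.prod_range_succ]
      congr 1
      simp [Polynomial.smeval_sub, Polynomial.smeval_X, Polynomial.smeval_natCast]
  have h2 := Ring.descPochhammer_eq_factorial_smul_choose z k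
  rw [h1] at h2
  rw [gchoose, h2, nsmul_eq_mul, mul_div_cancel_left₀]
  exact_mod_cast k.factorial_ne_zero

private lemma gchoose_vandermonde (x y : ℂ) (k : ℕ) :
    ∑ ij ∈ Finset.HasAntidiagonal.antidiagonal k, gchoose x ij.1 * gchoose y ij.2 = gchoose (x + y) k := by
  simp only [gchoose_eq_ringChoose]
  exact (Ring.add_choose_eq k (Commute.all x y)).symm

private lemma gchoose_zero (z : ℂ) : gchoose z 0 = 1 := by simp [gchoose]

private lemma gchoose_succ (z : ℂ) (k : ℕ) :
    gchoose z (k + 1) = gchoose z k * (z - k) / (k + 1) := by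
  rw [gchoose, gchoose, Finset.prod_range_succ, Nat.factorial_succ]
  push_cast
  field_simp

private lemma gchoose_one_val (k : ℕ) :
    gchoose 1 k = if k = 0 ∨ k = 1 then 1 else 0 := by
  match k with
  | 0 => simp [gchoose_zero]
  | 1 => norm_num [gchoose_succ, gchoose_zero]
  | (n+2) =>
    rw [gchoose_eq_ringChoose]
    have h : Ring.choose ((1:ℕ) : ℂ) (n+2) = (Nat.choose 1 (n+2) : ℂ) := Ring.choose_natCast 1 (n+2)
    simp only [Nat.cast_one] at h
    rw [h, Nat.choose_eq_zero_of_lt (by omega)]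
    simp

private lemma gchoose_half_one : gchoose (1/2) 1 = 1/2 := by
  norm_num [gchoose_succ, gchoose_zero]

private lemma gchoose_half_bound : ∀ m : ℕ, 2 ≤ m → ‖gchoose (1/2) m‖ ≤ 1/(4*m) := by
  intro m hm
  induction m, hm using Nat.le_induction with
  | base =>
    have h : gchoose (1/2 : ℂ) 2 = -(1/8) := by
      norm_num [gchoose_succ, gchoose_zero]
    rw [h]
    norm_num
  | succ m hm ih =>
    rw [gchoose_succ]
    rw [norm_div, norm_mul]
    have h1 : ‖(1/2 : ℂ) - (m:ℂ)‖ = (m : ℝ) - 1/2 := by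
      have h : ((1/2 : ℂ) - (m:ℂ)) = (((1/2 - m : ℝ)) : ℂ) := by push_cast; ring
      rw [h, Complex.norm_real, Real.norm_eq_abs, abs_of_nonpos (by
        have : (2:ℝ) ≤ m := by exact_mod_cast hm
        linarith)]
      ring
    have h2 : ‖(m:ℂ) + 1‖ = (m : ℝ) + 1 := by
      have h : ((m:ℂ) + 1) = (((m + 1 : ℝ)) : ℂ) := by push_cast; ring
      rw [h, Complex.norm_real, Real.norm_eq_abs, abs_of_pos (by positivity)]
    rw [h1, h2]
    have hm' : (2:ℝ) ≤ (m:ℝ) := by exact_mod_cast hm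
    have habs : (0:ℝ) ≤ ‖gchoose (1/2) m‖ := norm_nonneg _
    push_cast
    rw [div_le_div_iff₀ (by positivity) (by positivity)]
    have ih' : ‖gchoose (1/2) m‖ * (4*(m:ℝ)) ≤ 1 := by
      rw [← le_div_iff₀ (by positivity)]
      exact ih
    nlinarith [mul_le_mul_of_nonneg_right ih' (show (0:ℝ) ≤ (m:ℝ)+1 by positivity), habs,
      mul_nonneg habs (show (0:ℝ) ≤ (m:ℝ)+1 by positivity)]

/-- The power series `(1 - c X)^{1/2}`. -/
private def Bser (c : ℂ) : PowerSeries ℂ := PowerSeries.mk (fun i => gchoose (1/2) i * (-c)^i)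

private lemma coeff_one_sub_CX (c : ℂ) (k : ℕ) :
    PowerSeries.coeff (R := ℂ) k (1 - PowerSeries.C (R := ℂ) c * PowerSeries.X) =
      if k = 0 then 1 else if k = 1 then -c else 0 := by
  rw [map_sub, PowerSeries.coeff_one, PowerSeries.coeff_C_mul, PowerSeries.coeff_X]
  rcases eq_or_ne k 0 with h0 | h0
  · subst h0; norm_num
  rcases eq_or_ne k 1 with h1 | h1
  · subst h1; norm_num
  · rw [if_neg h0, if_neg h1, if_neg h0, if_neg h1]; ring

private lemma Bser_sq (c : ℂ) : (Bser c) * (Bser c) = 1 - (PowerSeries.C (R := ℂ) c) * PowerSeries.X := by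
  ext k
  rw [PowerSeries.coeff_mul]
  have h1 : ∀ ij ∈ Finset.HasAntidiagonal.antidiagonal k,
      (PowerSeries.coeff (R := ℂ) ij.1) (Bser c) * (PowerSeries.coeff (R := ℂ) ij.2) (Bser c) =
      (gchoose (1/2) ij.1 * gchoose (1/2) ij.2) * (-c)^k := by
    intro ij hij
    simp only [Bser, PowerSeries.coeff_mk]
    rw [← (Finset.HasAntidiagonal.mem_antidiagonal.mp hij), pow_add]
    ring
  rw [Finset.sum_congr rfl h1, ← Finset.sum_mul]
  have h2 : ∑ ij ∈ Finset.HasAntidiagonal.antidiagonal k, gchoose (1/2 : ℂ) ij.1 * gchoose (1/2) ij.2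
      = gchoose 1 k := by
    rw [gchoose_vandermonde]; norm_num
  rw [h2, gchoose_one_val, coeff_one_sub_CX]
  match k with
  | 0 => norm_num
  | 1 => norm_num
  | (n+2) =>
    rw [if_neg (by omega : ¬ ((n+2) = 0 ∨ (n+2) = 1)), if_neg (by omega : ¬ (n+2) = 0),
      if_neg (by omega : ¬ (n+2) = 1), zero_mul]

private lemma coeff_one_sub_X_sq (k : ℕ) :
    PowerSeries.coeff (R := ℂ) k (1 - PowerSeries.X^2) = if k = 0 then 1 else if k = 2 then -1 else 0 := by
  rw [map_sub, PowerSeries.coeff_one, PowerSeries.coeff_X_pow]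
  rcases eq_or_ne k 0 with h0 | h0
  · subst h0; norm_num
  rcases eq_or_ne k 2 with h2 | h2
  · subst h2; norm_num
  · rw [if_neg h0, if_neg h2, if_neg h0, if_neg h2]; norm_num

/-- The power series `(1 - X²)^{1/2}`. -/
private def Us : PowerSeries ℂ :=
  PowerSeries.mk (fun k => if 2 ∣ k then gchoose (1/2) (k/2) * (-1)^(k/2) else 0)

private lemma Us_sq : Us * Us = 1 - PowerSeries.X^2 := by
  ext k
  rw [PowerSeries.coeff_mul, Finset.Nat.sum_antidiagonal_eq_sum_range_succ_mk]
  simp only [Us, PowerSeries.coeff_mk]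
  rcases Nat.even_or_odd k with ⟨m, hm⟩ | hk
  · subst hm
    have hsum : ∑ i ∈ Finset.range (m + m + 1),
        (if 2 ∣ i then gchoose (1/2 : ℂ) (i/2) * (-1)^(i/2) else 0) *
        (if 2 ∣ (m + m - i) then gchoose (1/2) ((m+m-i)/2) * (-1)^((m+m-i)/2) else 0)
        = ∑ a ∈ Finset.range (m + 1),
            (gchoose (1/2 : ℂ) a * (-1)^a) * (gchoose (1/2) (m - a) * (-1)^(m-a)) := by
      rw [← Finset.sum_filter_add_sum_filter_not (Finset.range (m+m+1)) (fun i => 2 ∣ i)]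
      have hodd : ∑ i ∈ (Finset.range (m+m+1)).filter (fun i => ¬ 2 ∣ i),
          (if 2 ∣ i then gchoose (1/2 : ℂ) (i/2) * (-1)^(i/2) else 0) *
          (if 2 ∣ (m + m - i) then gchoose (1/2) ((m+m-i)/2) * (-1)^((m+m-i)/2) else 0) = 0 := by
        refine Finset.sum_eq_zero fun i hi => ?_
        rw [Finset.mem_filter] at hi
        rw [if_neg hi.2, zero_mul]
      rw [hodd, add_zero]
      refine Finset.sum_bij' (fun i _ => i / 2) (fun a _ => 2 * a) ?_ ?_ ?_ ?_ ?_
      · intro i hi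
        rw [Finset.mem_filter, Finset.mem_range] at hi
        rw [Finset.mem_range]
        omega
      · intro a ha
        rw [Finset.mem_range] at ha
        rw [Finset.mem_filter, Finset.mem_range]
        omega
      · intro i hi
        rw [Finset.mem_filter] at hi
        omega
      · intro a ha
        omega
      · intro i hi
        rw [Finset.mem_filter, Finset.mem_range] at hi
        obtain ⟨hi1, j, hj⟩ := hi
        subst hj
        have h2 : 2 ∣ (m + m - 2 * j) := by omega
        rw [if_pos ⟨j, by omega⟩, if_pos h2]
        have e1 : 2 * j / 2 = j := by omega
        have e2 : (m + m - 2*j) / 2 = m - j := by omega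
        rw [e1, e2]
    rw [hsum]
    have h3 : ∀ a ∈ Finset.range (m+1),
        (gchoose (1/2 : ℂ) a * (-1)^a) * (gchoose (1/2) (m - a) * (-1)^(m-a))
        = (gchoose (1/2 : ℂ) a * gchoose (1/2) (m-a)) * (-1)^m := by
      intro a ha
      rw [Finset.mem_range] at ha
      have hpow : (-1 : ℂ)^a * (-1)^(m-a) = (-1)^m := by
        rw [← pow_add]; congr 1; omega
      calc (gchoose (1/2 : ℂ) a * (-1)^a) * (gchoose (1/2) (m - a) * (-1)^(m-a))
          = (gchoose (1/2 : ℂ) a * gchoose (1/2) (m-a)) * ((-1)^a * (-1)^(m-a)) := by ring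
        _ = _ := by rw [hpow]
    rw [Finset.sum_congr rfl h3, ← Finset.sum_mul]
    have h4 : ∑ a ∈ Finset.range (m+1), gchoose (1/2 : ℂ) a * gchoose (1/2) (m-a)
        = gchoose 1 m := by
      rw [← Finset.Nat.sum_antidiagonal_eq_sum_range_succ_mk
        (fun ij => gchoose (1/2 : ℂ) ij.1 * gchoose (1/2) ij.2), gchoose_vandermonde]
      norm_num
    rw [h4, gchoose_one_val, coeff_one_sub_X_sq]
    match m with
    | 0 => norm_num [gchoose_zero]
    | 1 => norm_num
    | (n+2) =>
      have h5 : ¬ (n + 2 = 0 ∨ n + 2 = 1) := by omega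
      rw [if_neg h5, if_neg (by omega : ¬ (n+2)+(n+2) = 0), if_neg (by omega : ¬ (n+2)+(n+2) = 2)]
      norm_num
  · have hz : ∀ i ∈ Finset.range (k+1),
        (if 2 ∣ i then gchoose (1/2 : ℂ) (i/2) * (-1)^(i/2) else 0) *
        (if 2 ∣ (k - i) then gchoose (1/2) ((k-i)/2) * (-1)^((k-i)/2) else 0) = 0 := by
      intro i hi
      rw [Finset.mem_range] at hi
      rcases Nat.even_or_odd i with he | ho
      · have h : ¬ 2 ∣ (k - i) := by
          obtain ⟨j, hj⟩ := he; obtain ⟨l, hl⟩ := hk; omega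
        rw [if_neg h, mul_zero]
      · have h : ¬ 2 ∣ i := by obtain ⟨j, hj⟩ := ho; omega
        rw [if_neg h, zero_mul]
    rw [Finset.sum_eq_zero hz]
    obtain ⟨l, hl⟩ := hk
    rw [coeff_one_sub_X_sq, if_neg (by omega), if_neg (by omega)]

private lemma char_val_sq_one {d : ℕ} (hd : 0 < d) (χ : DirichletCharacter ℂ d)
    (hreal : ∀ a : ZMod d, star (χ a) = χ a) {p : ℕ} (hcop : Nat.Coprime p d) :
    (χ ((p : ℕ) : ZMod d))^2 = 1 := by
  haveI : NeZero d := ⟨hd.ne'⟩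
  have hu : IsUnit ((p : ℕ) : ZMod d) := (ZMod.isUnit_iff_coprime p d).mpr hcop
  obtain ⟨u, hu⟩ := hu
  have hn : (χ ((p:ℕ) : ZMod d))^(d.totient) = 1 := by
    rw [← map_pow, ← hu, ← Units.val_pow_eq_pow_val, ZMod.pow_totient u, Units.val_one, map_one]
  have him : (χ ((p:ℕ) : ZMod d)).im = 0 := by
    have h := hreal ((p:ℕ) : ZMod d)
    rw [Complex.star_def] at h
    exact Complex.conj_eq_iff_im.mp h
  set t := (χ ((p:ℕ) : ZMod d)).re with ht
  have hct : χ ((p:ℕ):ZMod d) = (t : ℂ) := by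
    apply Complex.ext <;> simp [him, ht]
  rw [hct] at hn
  have htn : t ^ d.totient = 1 := by exact_mod_cast hn
  have hn0 : d.totient ≠ 0 := (Nat.totient_pos.mpr hd).ne'
  rcases (pow_eq_one_iff_of_ne_zero hn0).mp htn with h | ⟨h, _⟩ <;> rw [hct, h] <;> norm_num

end Aux

theorem statement_9 (P : Ctx) (hP : P.Good) (α : ℕ → ℂ) (hα : P.IsAlpha α) :
    ∀ p : ℕ, p.Prime → ¬ p ∣ P.D →
      α p = -(P.χ₁ (p : ZMod P.d₁) + P.χ₂ (p : ZMod P.d₂)) / 2 ∧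
      α (p ^ 2) = -((P.χ₁ (p : ZMod P.d₁)) ^ 2 + (P.χ₂ (p : ZMod P.d₂)) ^ 2) / 8 +
        P.chiD p / 4 ∧
      (∀ k : ℕ, Odd k → 3 ≤ k → α (p ^ k) = 0) ∧
      (∀ k : ℕ, Even k → 4 ≤ k → ‖α (p ^ k)‖ ≤ 1 / (2 * (k : ℝ))) := by
  obtain ⟨hd₁, hd₂, hcop, _, _, _, hr₁, hr₂⟩ := hP
  intro p hp hpD
  set c₁ := P.χ₁ ((p : ℕ) : ZMod P.d₁) with hc₁def
  set c₂ := P.χ₂ ((p : ℕ) : ZMod P.d₂) with hc₂def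
  have hpd₁ : ¬ p ∣ P.d₁ := fun h => hpD (h.trans (dvd_mul_right _ _))
  have hpd₂ : ¬ p ∣ P.d₂ := fun h => hpD (h.trans (dvd_mul_left _ _))
  have hsq₁ : c₁^2 = 1 := char_val_sq_one hd₁ P.χ₁ hr₁ (hp.coprime_iff_not_dvd.mpr hpd₁)
  have hsq₂ : c₂^2 = 1 := char_val_sq_one hd₂ P.χ₂ hr₂ (hp.coprime_iff_not_dvd.mpr hpd₂)
  have key : ∀ k, α (p^k) = PowerSeries.coeff (R := ℂ) k (Bser c₁ * Bser c₂) := by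
    intro k
    rw [hα.2.2 p hp k, PowerSeries.coeff_mul]
    refine Finset.sum_congr rfl fun ij _ => ?_
    simp only [Bser, PowerSeries.coeff_mk]
    rfl
  have hchiD : P.chiD p = c₁ * c₂ := rfl
  have hcases : c₂ = c₁ ∨ c₂ = -c₁ := by
    have h : (c₂ - c₁) * (c₂ + c₁) = 0 := by
      have : (c₂ - c₁) * (c₂ + c₁) = c₂^2 - c₁^2 := by ring
      rw [this, hsq₁, hsq₂, sub_self]
    rcases mul_eq_zero.mp h with h' | h'
    · left; linear_combination h'
    · right; linear_combination h'
  rcases hcases with hcc | hcc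
  · -- c₂ = c₁
    have hF : Bser c₁ * Bser c₂ = 1 - PowerSeries.C (R := ℂ) c₁ * PowerSeries.X := by
      rw [hcc]; exact Bser_sq c₁
    have hval : ∀ k, α (p ^ k) = if k = 0 then 1 else if k = 1 then -c₁ else 0 := by
      intro k; rw [key, hF, coeff_one_sub_CX]
    refine ⟨?_, ?_, ?_, ?_⟩
    · have h1 := hval 1
      rw [pow_one] at h1
      rw [h1, hcc]
      norm_num
    · rw [hval 2, hchiD, hcc]
      norm_num
      ring
    · intro k hodd hk3
      rw [hval k, if_neg (by omega), if_neg (by omega)]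
    · intro k hev hk4
      rw [hval k, if_neg (by omega), if_neg (by omega)]
      have : (0:ℝ) < k := by positivity
      simp only [norm_zero]
      positivity
  · -- c₂ = -c₁
    have hFsq : (Bser c₁ * Bser c₂) * (Bser c₁ * Bser c₂) = Us * Us := by
      rw [Us_sq]
      have h1 : (Bser c₁ * Bser c₂) * (Bser c₁ * Bser c₂)
          = (Bser c₁ * Bser c₁) * (Bser c₂ * Bser c₂) := by ring
      rw [h1, Bser_sq, Bser_sq, hcc, map_neg]
      have hC : (PowerSeries.C (R := ℂ) c₁)^2 = 1 := by rw [← map_pow, hsq₁, map_one]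
      linear_combination (-(PowerSeries.X^2 : PowerSeries ℂ)) * hC
    have hF : Bser c₁ * Bser c₂ = Us := by
      rcases mul_self_eq_mul_self_iff.mp hFsq with h | h
      · exact h
      · exfalso
        have h0 : PowerSeries.constantCoeff (R := ℂ) (Bser c₁ * Bser c₂) = 1 := by
          rw [map_mul]
          simp [Bser, PowerSeries.constantCoeff_mk, gchoose_zero]
        have h0' : PowerSeries.constantCoeff (R := ℂ) (-Us) = -1 := by
          simp [Us, PowerSeries.constantCoeff_mk, gchoose_zero]
        rw [h, h0'] at h0
        norm_num at h0
    have hval : ∀ k, α (p ^ k) =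
        if 2 ∣ k then gchoose (1/2) (k/2) * (-1)^(k/2) else 0 := by
      intro k; rw [key, hF]
      simp [Us]
    refine ⟨?_, ?_, ?_, ?_⟩
    · have h1 := hval 1
      rw [pow_one] at h1
      rw [h1, if_neg (by omega), hcc]
      ring
    · rw [hval 2, if_pos ⟨1, rfl⟩, hchiD, hcc]
      have e1 : (2:ℕ)/2 = 1 := rfl
      rw [e1, gchoose_half_one]
      linear_combination ((1:ℂ)/2) * hsq₁
    · intro k hodd hk
      rw [hval k, if_neg (by obtain ⟨j, hj⟩ := hodd; omega)]
    · intro k hev hk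
      obtain ⟨m, hm⟩ := hev
      rw [hval k, if_pos ⟨m, by omega⟩]
      have hk2 : k / 2 = m := by omega
      rw [hk2, norm_mul, norm_pow]
      have habs1 : ‖(-1 : ℂ)‖ = 1 := by simp
      rw [habs1, one_pow, mul_one]
      have hb := gchoose_half_bound m (by omega)
      have hkm : (k:ℝ) = 2 * (m:ℝ) := by
        have : k = 2 * m := by omega
        exact_mod_cast this
      rw [hkm]
      calc ‖gchoose (1/2) m‖ ≤ 1/(4*(m:ℝ)) := hb
        _ = 1 / (2 * (2 * (m:ℝ))) := by ring_nf


end EpsteinPaper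
end
end
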